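/- Let ψ_θ and ψ_φ be strict Archimedean generators, ρ = ψ_φ^{-1}∘ψ_θ, and F̄_i, F̄_j, F̄_k survival functions. Define H_{0,j} = ψ_θ^{-1}∘F̄_i + ψ_θ^{-1}∘F̄_j and H_{0,k} = ψ_φ^{-1}∘F̄_i + ψ_φ^{-1}∘F̄_k (continuous strictly increasing bijections of [0,∞) onto itself), D_{ij} = ψ_θ^{-1}∘F̄_i∘H_{0,j}^{-1}, D_{ik} = ψ_θ^{-1}∘F̄_i∘H_{0,k}^{-1}, D_{ji} = ψ_θ^{-1}∘F̄_j∘H_{0,j}^{-1}, D_{ki} = ψ_φ^{-1}∘F̄_k∘H_{0,k}^{-1}. Let F̄_{τ_j,τ_k}(t_j,t_k) = ψ_φ( ψ_φ^{-1}( ψ_θ( ψ_θ^{-1}(F̄_i(max(t_j,t_k))) + ψ_θ^{-1}(F̄_j(t_j)) ) ) + ψ_φ^{-1}(F̄_k(t_k)) ), F̄_{τ_j} = ψ_θ∘H_{0,j}, F̄_{τ_k} = ψ_φ∘H_{0,k}. Define Ĉ:(0,1]²→(0,1] by: Ĉ(u,v) = ψ_φ( ψ_φ^{-1}(u) + D_{ki}(ψ_φ^{-1}(v))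 ) if D_{ij}(ψ_θ^{-1}(u)) ≥ D_{ik}(ψ_φ^{-1}(v)), and Ĉ(u,v) = ψ_φ( ρ( D_{ik}(ψ_φ^{-1}(v)) + D_{ji}(ψ_θ^{-1}(u)) ) + D_{ki}(ψ_φ^{-1}(v)) ) otherwise. Then F̄_{τ_j,τ_k}(t_j,t_k) = Ĉ( F̄_{τ_j}(t_j), F̄_{τ_k}(t_k) ) for all t_j,t_k∈[0,∞); that is, Ĉ is the survival copula of (τ_j,τ_k). -/

import Mathlib

open Set MeasureTheory

/-- A survival function: continuous, strictly decreasing on `[0,∞)`, equal to `1` at `0`,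
tending to `0` at `+∞`, with values in `(0,1]` on `[0,∞)`. -/
structure SurvFun where
  toFun : ℝ → ℝ
  continuousOn : ContinuousOn toFun (Ici 0)
  strictAntiOn : StrictAntiOn toFun (Ici 0)
  map_zero : toFun 0 = 1
  tendsto_atTop : Filter.Tendsto toFun Filter.atTop (nhds 0)
  mapsTo : MapsTo toFun (Ici 0) (Ioc 0 1)

/-- A strict Archimedean generator: a continuous strictly decreasing bijection of `[0,∞)`
onto `(0,1]` with `ψ 0 = 1` and `ψ x → 0` as `x → ∞`, together with its inverse. -/
structure ArchGen extends SurvFun where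
  bijOn : BijOn toFun (Ici 0) (Ioc 0 1)
  inv : ℝ → ℝ
  inv_mapsTo : MapsTo inv (Ioc 0 1) (Ici 0)
  leftInv : ∀ x ∈ Ici (0:ℝ), inv (toFun x) = x
  rightInv : ∀ u ∈ Ioc (0:ℝ) 1, toFun (inv u) = u

/-- the survival copula of `(τ_j, τ_k) = (min(X_i,X_j), min(X_i,X_k))`
in the hierarchical contagion model with systemic shock `X_i`. -/
theorem hierarchical_survival_copula_systemic_inner
    (Gθ Gφ : ArchGen) (Fi Fj Fk : SurvFun)
    (H0jinv H0kinv : ℝ → ℝ)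
    (hH0j_maps : MapsTo H0jinv (Ici 0) (Ici 0))
    (hH0k_maps : MapsTo H0kinv (Ici 0) (Ici 0))
    (hH0j_left : ∀ x ∈ Ici (0:ℝ),
      H0jinv (Gθ.inv (Fi.toFun x) + Gθ.inv (Fj.toFun x)) = x)
    (hH0j_right : ∀ y ∈ Ici (0:ℝ),
      Gθ.inv (Fi.toFun (H0jinv y)) + Gθ.inv (Fj.toFun (H0jinv y)) = y)
    (hH0k_left : ∀ x ∈ Ici (0:ℝ),
      H0kinv (Gφ.inv (Fi.toFun x) + Gφ.inv (Fk.toFun x)) = x)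
    (hH0k_right : ∀ y ∈ Ici (0:ℝ),
      Gφ.inv (Fi.toFun (H0kinv y)) + Gφ.inv (Fk.toFun (H0kinv y)) = y) :
    let ρ : ℝ → ℝ := fun x => Gφ.inv (Gθ.toFun x)
    let Dij : ℝ → ℝ := fun x => Gθ.inv (Fi.toFun (H0jinv x))
    let Dik : ℝ → ℝ := fun x => Gθ.inv (Fi.toFun (H0kinv x))
    let Dji : ℝ → ℝ := fun x => Gθ.inv (Fj.toFun (H0jinv x))
    let Dki : ℝ → ℝ := fun x => Gφ.inv (Fk.toFun (H0kinv x))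
    let Chat : ℝ → ℝ → ℝ := fun u v =>
      if Dik (Gφ.inv v) ≤ Dij (Gθ.inv u) then
        Gφ.toFun (Gφ.inv u + Dki (Gφ.inv v))
      else
        Gφ.toFun (ρ (Dik (Gφ.inv v) + Dji (Gθ.inv u)) + Dki (Gφ.inv v))
    ∀ tj tk : ℝ, 0 ≤ tj → 0 ≤ tk →
      Gφ.toFun (Gφ.inv (Gθ.toFun (Gθ.inv (Fi.toFun (max tj tk)) + Gθ.inv (Fj.toFun tj)))
          + Gφ.inv (Fk.toFun tk))
        = Chat (Gθ.toFun (Gθ.inv (Fi.toFun tj) + Gθ.inv (Fj.toFun tj)))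
            (Gφ.toFun (Gφ.inv (Fi.toFun tk) + Gφ.inv (Fk.toFun tk))) := by
  intro ρ Dij Dik Dji Dki Chat tj tk htj htk
  have hFitj : Fi.toFun tj ∈ Ioc (0:ℝ) 1 := Fi.mapsTo htj
  have hFitk : Fi.toFun tk ∈ Ioc (0:ℝ) 1 := Fi.mapsTo htk
  have hFjtj : Fj.toFun tj ∈ Ioc (0:ℝ) 1 := Fj.mapsTo htj
  have hFktk : Fk.toFun tk ∈ Ioc (0:ℝ) 1 := Fk.mapsTo htk
  have ha : Gθ.inv (Fi.toFun tj) ∈ Ici (0:ℝ) := Gθ.inv_mapsTo hFitj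
  have hb : Gθ.inv (Fj.toFun tj) ∈ Ici (0:ℝ) := Gθ.inv_mapsTo hFjtj
  have hc : Gφ.inv (Fi.toFun tk) ∈ Ici (0:ℝ) := Gφ.inv_mapsTo hFitk
  have hd : Gφ.inv (Fk.toFun tk) ∈ Ici (0:ℝ) := Gφ.inv_mapsTo hFktk
  have hsθ : Gθ.inv (Fi.toFun tj) + Gθ.inv (Fj.toFun tj) ∈ Ici (0:ℝ) :=
    Set.mem_Ici.mpr (add_nonneg ha hb)
  have hsφ : Gφ.inv (Fi.toFun tk) + Gφ.inv (Fk.toFun tk) ∈ Ici (0:ℝ) :=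
    Set.mem_Ici.mpr (add_nonneg hc hd)
  have hu : Gθ.inv (Gθ.toFun (Gθ.inv (Fi.toFun tj) + Gθ.inv (Fj.toFun tj)))
      = Gθ.inv (Fi.toFun tj) + Gθ.inv (Fj.toFun tj) := Gθ.leftInv _ hsθ
  have hv : Gφ.inv (Gφ.toFun (Gφ.inv (Fi.toFun tk) + Gφ.inv (Fk.toFun tk)))
      = Gφ.inv (Fi.toFun tk) + Gφ.inv (Fk.toFun tk) := Gφ.leftInv _ hsφ
  have hHj : H0jinv (Gθ.inv (Fi.toFun tj) + Gθ.inv (Fj.toFun tj)) = tj :=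
    hH0j_left tj htj
  have hHk : H0kinv (Gφ.inv (Fi.toFun tk) + Gφ.inv (Fk.toFun tk)) = tk :=
    hH0k_left tk htk
  -- antitone of Gθ.inv on Ioc 0 1
  have inv_anti : ∀ a ∈ Ioc (0:ℝ) 1, ∀ b ∈ Ioc (0:ℝ) 1, a ≤ b → Gθ.inv b ≤ Gθ.inv a := by
    intro a haI b hbI hab
    by_contra h
    push_neg at h
    have := Gθ.strictAntiOn (Gθ.inv_mapsTo haI) (Gθ.inv_mapsTo hbI) h
    rw [Gθ.rightInv a haI, Gθ.rightInv b hbI] at this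
    linarith
  simp only [Chat, Dij, Dik, Dji, Dki, ρ, hu, hv, hHj, hHk]
  rcases le_or_gt tk tj with hle | hlt
  · have hFle : Fi.toFun tj ≤ Fi.toFun tk := (Fi.strictAntiOn.antitoneOn htk htj) hle
    have hcond : Gθ.inv (Fi.toFun tk) ≤ Gθ.inv (Fi.toFun tj) :=
      inv_anti _ hFitj _ hFitk hFle
    rw [if_pos hcond, max_eq_left hle]
  · have hFlt : Fi.toFun tk < Fi.toFun tj := Fi.strictAntiOn htj htk hlt
    have hcond : ¬ (Gθ.inv (Fi.toFun tk) ≤ Gθ.inv (Fi.toFun tj)) := by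
      intro h
      have := inv_anti _ hFitk _ hFitj hFlt.le
      have heq : Gθ.inv (Fi.toFun tk) = Gθ.inv (Fi.toFun tj) := le_antisymm h this
      have := congrArg Gθ.toFun heq
      rw [Gθ.rightInv _ hFitk, Gθ.rightInv _ hFitj] at this
      linarith
    rw [if_neg hcond, max_eq_right hlt.le]
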